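/- Fix μ_1,...,μ_k > 0 and let f(t_1,...,t_k) = ∏_{i=1}^k t_i/(t_i+μ_i) on R_+^k. Then f is concave (as a real-valued function) on the convex domain D_k(μ_1,...,μ_k), i.e., the Hessian of f is negative semidefinite at every point of D_k. -/

import Mathlib

open Matrix

/-- The matrix `A_k(t)` with diagonal entries `2tᵢ/μᵢ` and off-diagonal entries `-1`. -/
noncomputable def Amat {k : ℕ} (μ t : Fin k → ℝ) : Matrix (Fin k) (Fin k) ℝ :=
  Matrix.of fun i j => if i = j then 2 * t i / μ i else -1

/-- The domain `D_k(μ₁,…,μ_k)`. -/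
def Dk {k : ℕ} (μ : Fin k → ℝ) : Set (Fin k → ℝ) :=
  {t | (∀ i, 0 < t i) ∧ (Amat μ t).PosSemidef}

-- quadratic form expansion
lemma quad_expand {k : ℕ} (μ u wv : Fin k → ℝ) :
    wv ⬝ᵥ (Amat μ u) *ᵥ wv
      = ∑ i, ((2 * u i / μ i) * wv i ^ 2 - (∑ j ∈ Finset.univ.erase i, wv j) * wv i) := by
  have h : ∀ i : Fin k, (Amat μ u *ᵥ wv) i
      = (2 * u i / μ i) * wv i + ∑ j ∈ Finset.univ.erase i, (-1) * wv j := by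
    intro i
    show ∑ j, (if i = j then 2 * u i / μ i else -1) * wv j = _
    rw [← Finset.add_sum_erase _ _ (Finset.mem_univ i)]
    simp only [if_pos rfl]
    congr 1
    refine Finset.sum_congr rfl fun j hj => ?_
    rw [if_neg (Ne.symm (Finset.ne_of_mem_erase hj))]
  unfold dotProduct
  refine Finset.sum_congr rfl fun i _ => ?_
  rw [h i]
  simp only [neg_one_mul, Finset.sum_neg_distrib]
  ring

lemma Amat_herm {k : ℕ} (μ t : Fin k → ℝ) : (Amat μ t).IsHermitian := by
  ext i j
  simp only [Matrix.conjTranspose_apply, star_trivial, Amat, Matrix.of_apply]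
  by_cases h : i = j
  · subst h; rfl
  · rw [if_neg h, if_neg (Ne.symm h)]

lemma Amat_comb {k : ℕ} (μ x y : Fin k → ℝ) {a b : ℝ} (hab : a + b = 1) :
    Amat μ (a • x + b • y) = a • Amat μ x + b • Amat μ y := by
  ext i j
  simp only [Amat, Matrix.of_apply, Matrix.add_apply, Matrix.smul_apply, Pi.add_apply,
    Pi.smul_apply, smul_eq_mul]
  by_cases h : i = j
  · simp only [if_pos h]; ring
  · simp only [if_neg h]; linarith

lemma Dk_convex {k : ℕ} (μ : Fin k → ℝ) : Convex ℝ (Dk μ) := by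
  rintro x ⟨hx1, hx2⟩ y ⟨hy1, hy2⟩ a b ha hb hab
  constructor
  · intro i
    simp only [Pi.add_apply, Pi.smul_apply, smul_eq_mul]
    rcases eq_or_lt_of_le ha with h | h
    · have hb1 : b = 1 := by linarith
      simp [← h, hb1, hy1 i]
    · have := mul_nonneg hb (hy1 i).le
      nlinarith [hx1 i]
  · rw [Amat_comb μ x y hab]
    refine Matrix.PosSemidef.of_dotProduct_mulVec_nonneg ?_ ?_
    · rw [← Amat_comb μ x y hab]; exact Amat_herm _ _
    · intro z
      have h1 := hx2.dotProduct_mulVec_nonneg z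
      have h2 := hy2.dotProduct_mulVec_nonneg z
      simp only [Matrix.add_mulVec, Matrix.smul_mulVec, dotProduct_add,
        dotProduct_smul, smul_eq_mul]
      exact add_nonneg (mul_nonneg ha h1) (mul_nonneg hb h2)

noncomputable def segF {k : ℕ} (μ x v : Fin k → ℝ) (i : Fin k) (s : ℝ) : ℝ :=
  (x i + s * v i) / (x i + s * v i + μ i)

noncomputable def segd {k : ℕ} (μ x v : Fin k → ℝ) (i : Fin k) (s : ℝ) : ℝ :=
  μ i * v i / (x i + s * v i + μ i) ^ 2

noncomputable def sege {k : ℕ} (μ x v : Fin k → ℝ) (i : Fin k) (s : ℝ) : ℝ :=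
  -(2 * μ i * v i ^ 2) / (x i + s * v i + μ i) ^ 3

noncomputable def segw {k : ℕ} (μ x v : Fin k → ℝ) (i : Fin k) (s : ℝ) : ℝ :=
  μ i * v i / ((x i + s * v i) * (x i + s * v i + μ i))

noncomputable def segG {k : ℕ} (μ x v : Fin k → ℝ) (s : ℝ) : ℝ := ∏ i, segF μ x v i s

noncomputable def segG' {k : ℕ} (μ x v : Fin k → ℝ) (s : ℝ) : ℝ :=
  ∑ i, (∏ j ∈ Finset.univ.erase i, segF μ x v j s) * segd μ x v i s

noncomputable def segG'' {k : ℕ} (μ x v : Fin k → ℝ) (s : ℝ) : ℝ :=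
  ∑ i, ((∑ j ∈ Finset.univ.erase i,
        (∏ l ∈ (Finset.univ.erase i).erase j, segF μ x v l s) * segd μ x v j s) * segd μ x v i s
    + (∏ j ∈ Finset.univ.erase i, segF μ x v j s) * sege μ x v i s)

section derivs

variable {k : ℕ} {μ x v : Fin k → ℝ} {s : ℝ}

lemma hasDerivAt_T (i : Fin k) : HasDerivAt (fun u => x i + u * v i) (v i) s := by
  simpa using ((hasDerivAt_id s).mul_const (v i)).const_add (x i)

lemma hasDerivAt_segF (hμ : ∀ i, 0 < μ i) (hs : ∀ i, 0 < x i + s * v i) (i : Fin k) :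
    HasDerivAt (segF μ x v i) (segd μ x v i s) s := by
  have hden : x i + s * v i + μ i ≠ 0 := ne_of_gt (add_pos (hs i) (hμ i))
  have h := (hasDerivAt_T (x := x) (v := v) i).div
    ((hasDerivAt_T (x := x) (v := v) i).add_const (μ i)) hden
  refine h.congr_deriv ?_
  unfold segd
  field_simp
  ring

lemma hasDerivAt_segd (hμ : ∀ i, 0 < μ i) (hs : ∀ i, 0 < x i + s * v i) (i : Fin k) :
    HasDerivAt (segd μ x v i) (sege μ x v i s) s := by
  have hden : x i + s * v i + μ i ≠ 0 := ne_of_gt (add_pos (hs i) (hμ i))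
  have h := (hasDerivAt_const s (μ i * v i)).div
    (((hasDerivAt_T (x := x) (v := v) i).add_const (μ i)).pow 2) (pow_ne_zero 2 hden)
  refine h.congr_deriv ?_
  unfold sege
  push_cast
  simp only [Pi.pow_apply]
  field_simp
  ring

lemma hasDerivAt_segG (hμ : ∀ i, 0 < μ i) (hs : ∀ i, 0 < x i + s * v i) :
    HasDerivAt (segG μ x v) (segG' μ x v s) s := by
  have := HasDerivAt.fun_finsetProd (u := Finset.univ) (f := fun i t => segF μ x v i t)
    (f' := fun i => segd μ x v i s) (fun i _ => hasDerivAt_segF hμ hs i)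
  exact this

lemma hasDerivAt_segG' (hμ : ∀ i, 0 < μ i) (hs : ∀ i, 0 < x i + s * v i) :
    HasDerivAt (segG' μ x v) (segG'' μ x v s) s := by
  apply HasDerivAt.fun_sum
  intro i _
  have hp := HasDerivAt.fun_finsetProd (u := Finset.univ.erase i)
    (f := fun j t => segF μ x v j t) (f' := fun j => segd μ x v j s)
    (fun j _ => hasDerivAt_segF hμ hs j)
  have := hp.mul (hasDerivAt_segd hμ hs i)
  exact this

end derivs

section algebra

variable {k : ℕ} {μ x v : Fin k → ℝ} {s : ℝ}

lemma segd_eq (hμ : ∀ i, 0 < μ i) (hs : ∀ i, 0 < x i + s * v i) (i : Fin k) :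
    segd μ x v i s = segF μ x v i s * segw μ x v i s := by
  have h1 : x i + s * v i ≠ 0 := ne_of_gt (hs i)
  have h2 : x i + s * v i + μ i ≠ 0 := ne_of_gt (add_pos (hs i) (hμ i))
  unfold segd segF segw
  field_simp
  rw [mul_comm (x i + v i * s), mul_div_mul_right _ _ (by rw [mul_comm (v i) s]; exact h1)]

lemma sege_eq (hμ : ∀ i, 0 < μ i) (hs : ∀ i, 0 < x i + s * v i) (i : Fin k) :
    sege μ x v i s
      = segF μ x v i s * (-(2 * (x i + s * v i) / μ i) * segw μ x v i s ^ 2) := by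
  have h1 : x i + s * v i ≠ 0 := ne_of_gt (hs i)
  have h2 : x i + s * v i + μ i ≠ 0 := ne_of_gt (add_pos (hs i) (hμ i))
  have h3 : μ i ≠ 0 := ne_of_gt (hμ i)
  unfold sege segF segw
  field_simp
  rw [mul_comm (x i + v i * s), mul_div_mul_right _ _ (by rw [mul_comm (v i) s]; exact h1)]

lemma segG''_eq (hμ : ∀ i, 0 < μ i) (hs : ∀ i, 0 < x i + s * v i) :
    segG'' μ x v s
      = -(segG μ x v s *
          ((fun i => segw μ x v i s) ⬝ᵥ
            (Amat μ (fun i => x i + s * v i)) *ᵥ (fun i => segw μ x v i s))) := by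
  rw [quad_expand, Finset.mul_sum, ← Finset.sum_neg_distrib]
  unfold segG''
  refine Finset.sum_congr rfl fun i _ => ?_
  have hinner : ∀ j ∈ Finset.univ.erase i,
      (∏ l ∈ (Finset.univ.erase i).erase j, segF μ x v l s) * segd μ x v j s
        = (∏ l ∈ Finset.univ.erase i, segF μ x v l s) * segw μ x v j s := by
    intro j hj
    rw [segd_eq hμ hs j, ← mul_assoc, Finset.prod_erase_mul _ _ hj]
  rw [Finset.sum_congr rfl hinner, ← Finset.mul_sum, segd_eq hμ hs i, sege_eq hμ hs i]
  have hG : segG μ x v s = (∏ l ∈ Finset.univ.erase i, segF μ x v l s) * segF μ x v i s := by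
    rw [Finset.prod_erase_mul _ _ (Finset.mem_univ i)]; rfl
  rw [hG]
  ring

lemma segG_nonneg (hμ : ∀ i, 0 < μ i) (hs : ∀ i, 0 < x i + s * v i) :
    0 ≤ segG μ x v s := by
  refine Finset.prod_nonneg fun i _ => ?_
  exact div_nonneg (hs i).le (add_pos (hs i) (hμ i)).le

end algebra

/-- The function `f(t₁,…,t_k) = ∏ tᵢ/(tᵢ+μᵢ)` is concave on the convex domain `D_k`. -/
theorem concave_on_Dk {k : ℕ} (μ : Fin k → ℝ) (hμ : ∀ i, 0 < μ i) :
    ConcaveOn ℝ (Dk μ) (fun t => ∏ i, t i / (t i + μ i)) := by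
  refine ⟨Dk_convex μ, ?_⟩
  intro x hx y hy a b ha hb hab
  have hpos : ∀ s ∈ Set.Icc (0:ℝ) 1, ∀ i, 0 < x i + s * (y - x) i := by
    intro s hs i
    simp only [Pi.sub_apply]
    rcases eq_or_lt_of_le hs.1 with h | h
    · simpa [← h] using hx.1 i
    · nlinarith [mul_pos h (hy.1 i), mul_nonneg (sub_nonneg.2 hs.2) (hx.1 i).le]
  have hconc : ConcaveOn ℝ (Set.Icc (0:ℝ) 1) (segG μ x (y - x)) := by
    apply concaveOn_of_hasDerivWithinAt2_nonpos (convex_Icc 0 1)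
      (f' := segG' μ x (y - x)) (f'' := segG'' μ x (y - x))
    · intro s hs
      exact (hasDerivAt_segG hμ (hpos s hs)).continuousAt.continuousWithinAt
    · intro s hs
      rw [interior_Icc] at hs
      exact (hasDerivAt_segG hμ (hpos s (Set.Ioo_subset_Icc_self hs))).hasDerivWithinAt
    · intro s hs
      rw [interior_Icc] at hs
      exact (hasDerivAt_segG' hμ (hpos s (Set.Ioo_subset_Icc_self hs))).hasDerivWithinAt
    · intro s hs
      rw [interior_Icc] at hs
      have hs' := hpos s (Set.Ioo_subset_Icc_self hs)
      rw [segG''_eq hμ hs']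
      have hmem : (fun i => x i + s * (y - x) i) = (1 - s) • x + s • y := by
        funext i
        simp only [Pi.sub_apply, Pi.add_apply, Pi.smul_apply, smul_eq_mul]
        ring
      have hDk : ((1 - s) • x + s • y) ∈ Dk μ :=
        Dk_convex μ hx hy (by linarith [hs.2]) hs.1.le (by ring)
      have hQ : 0 ≤ (fun i => segw μ x (y - x) i s) ⬝ᵥ
          Amat μ (fun i => x i + s * (y - x) i) *ᵥ (fun i => segw μ x (y - x) i s) := by
        rw [hmem]
        have h := hDk.2.dotProduct_mulVec_nonneg (fun i => segw μ x (y - x) i s)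
        simpa using h
      exact neg_nonpos.2 (mul_nonneg (segG_nonneg hμ hs') hQ)
  have h01 : (0:ℝ) ∈ Set.Icc (0:ℝ) 1 := by constructor <;> norm_num
  have h11 : (1:ℝ) ∈ Set.Icc (0:ℝ) 1 := by constructor <;> norm_num
  have key := hconc.2 h01 h11 ha hb hab
  have e0 : segG μ x (y - x) 0 = ∏ i, x i / (x i + μ i) := by
    unfold segG segF; simp
  have e1 : segG μ x (y - x) 1 = ∏ i, y i / (y i + μ i) := by
    unfold segG segF
    refine Finset.prod_congr rfl fun i _ => ?_
    rw [show x i + 1 * (y - x) i = y i by simp [Pi.sub_apply]]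
  have eb : segG μ x (y - x) (a • (0:ℝ) + b • 1)
      = ∏ i, (a • x + b • y) i / ((a • x + b • y) i + μ i) := by
    rw [show a • (0:ℝ) + b • 1 = b by simp]
    unfold segG segF
    refine Finset.prod_congr rfl fun i _ => ?_
    rw [show x i + b * (y - x) i = (a • x + b • y) i by
      simp only [Pi.sub_apply, Pi.add_apply, Pi.smul_apply, smul_eq_mul]
      have ha1 : a = 1 - b := by linarith
      rw [ha1]; ring]
  rw [e0, e1, eb] at key
  exact key
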